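/- Let K be an origin-symmetric C^∞-smooth convex body in ℝⁿ with strictly positive curvature containing the origin in its interior, let X_K = Dh_K : S^{n−1} → ∂K be the inverse Gauss map, and let P_K(x) = D²(‖x‖²_K/2) be the anisotropic Riemannian metric on ℝⁿ \ {0}. Given f ∈ C²(S^{n−1}) and τ ∈ ℝ, push f forward onto ∂K via X_K and let f̂ denote its positively τ-homogeneous extension to ℝⁿ \ {0}. Then the gradient of f̂ with respect to P_K, evaluated along ∂K, equals F := dX_K(grad_{g_K} f) + τ f X_K, where g_K is the centro-affine metric of K. -/

import Mathlib

open scoped RealInnerProductSpace ENNReal NNReal Pointwise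
open MeasureTheory Metric Set

noncomputable section

/-- `Euc n` is Euclidean space `ℝⁿ`. -/
abbrev Euc (n : ℕ) := EuclideanSpace ℝ (Fin n)

/-- A convex body in `ℝⁿ` (with the origin as an interior point). -/
def IsConvexBody (n : ℕ) (K : Set (Euc n)) : Prop :=
  IsCompact K ∧ Convex ℝ K ∧ (0 : Euc n) ∈ interior K

/-- An origin-symmetric set. -/
def IsOriginSymmetric {n : ℕ} (K : Set (Euc n)) : Prop := ∀ x ∈ K, -x ∈ K

/-- The support function `h_K (x) = max_{y ∈ K} ⟨x, y⟩`. -/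
def suppFn {n : ℕ} (K : Set (Euc n)) (x : Euc n) : ℝ :=
  sSup ((fun y => ⟪x, y⟫) '' K)

/-- Half of the squared Minkowski gauge, `‖x‖_K² / 2`. -/
def halfGaugeSq {n : ℕ} (K : Set (Euc n)) (x : Euc n) : ℝ := gauge K x ^ 2 / 2

/-- The Euclidean Hessian `D²f(x)(u,v)`. -/
def hess {n : ℕ} (f : Euc n → ℝ) (x u v : Euc n) : ℝ :=
  fderiv ℝ (fun y => fderiv ℝ f y v) x u

/-- The Gauss map (outer unit normal) of `∂K`, extended `0`-homogeneously to `ℝⁿ \ {0}`: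
for a smooth convex body containing the origin in its interior, the outer unit normal at
`x ∈ ∂K` is the normalized gradient of the Minkowski gauge. -/
def gaussMap {n : ℕ} (K : Set (Euc n)) (x : Euc n) : Euc n :=
  ‖gradient (gauge K) x‖⁻¹ • gradient (gauge K) x

/-- The second fundamental form `II_{∂K}(x)(u,v)` of `∂K` (for tangent vectors `u, v`),
via the Weingarten map, i.e. the differential of the Gauss map. -/
def secondFF {n : ℕ} (K : Set (Euc n)) (x u v : Euc n) : ℝ :=
  ⟪fderiv ℝ (gaussMap K) x u, v⟫

/-- `K ∈ 𝒦²₊`: a convex body with `C²`-smooth boundary (equivalently, `‖·‖_K²` is `C²` away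
from the origin) and strictly positive curvature (positive-definite second fundamental form). -/
def IsC2PlusBody (n : ℕ) (K : Set (Euc n)) : Prop :=
  IsConvexBody n K ∧ ContDiffOn ℝ 2 (halfGaugeSq K) {(0 : Euc n)}ᶜ ∧
  ∀ x ∈ frontier K, ∀ u : Euc n, ⟪gaussMap K x, u⟫ = 0 → u ≠ 0 → 0 < secondFF K x u u

/-- `K ∈ 𝒦^{2,r}₊`: as `IsC2PlusBody`, with second derivatives of `‖·‖_K²/2` moreover
`r`-Hölder continuous on the unit sphere. -/
def IsC2HolderBody (n : ℕ) (r : ℝ) (K : Set (Euc n)) : Prop :=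
  IsC2PlusBody n K ∧ ∃ C : ℝ, ∀ x ∈ sphere (0 : Euc n) 1, ∀ y ∈ sphere (0 : Euc n) 1,
    ‖fderiv ℝ (fun z => fderiv ℝ (halfGaugeSq K) z) x
      - fderiv ℝ (fun z => fderiv ℝ (halfGaugeSq K) z) y‖ ≤ C * ‖x - y‖ ^ r

/-- `K ∈ 𝒦^{2,α}₊` for some Hölder exponent `α ∈ (0,1]`. -/
def IsC2AlphaBody (n : ℕ) (K : Set (Euc n)) : Prop :=
  ∃ r : ℝ, 0 < r ∧ r ≤ 1 ∧ IsC2HolderBody n r K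

/-- `K ∈ 𝒦^∞₊`: a `C^∞`-smooth convex body with strictly positive curvature. -/
def IsSmoothBody (n : ℕ) (K : Set (Euc n)) : Prop :=
  IsConvexBody n K ∧ ContDiffOn ℝ (⊤ : ℕ∞) (halfGaugeSq K) {(0 : Euc n)}ᶜ ∧
  ∀ x ∈ frontier K, ∀ u : Euc n, ⟪gaussMap K x, u⟫ = 0 → u ≠ 0 → 0 < secondFF K x u u

/-- The surface-area measure `S_K` of `K`, as a measure on `ℝⁿ` concentrated on `S^{n-1}`:
the push-forward of the `(n-1)`-dimensional Hausdorff measure on `∂K` via the Gauss map. -/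
def surfaceMeasure (n : ℕ) (K : Set (Euc n)) : Measure (Euc n) :=
  Measure.map (gaussMap K) ((μH[(n : ℝ) - 1] : Measure (Euc n)).restrict (frontier K))

/-- The `L^p` surface-area measure `S_p K = h_K^{1-p} S_K`. -/
def lpSurfaceMeasure (n : ℕ) (p : ℝ) (K : Set (Euc n)) : Measure (Euc n) :=
  (surfaceMeasure n K).withDensity fun θ => ENNReal.ofReal (suppFn K θ ^ (1 - p))

/-- The cone-volume measure `V_K = (1/n) h_K S_K`. -/
def coneVolumeMeasure (n : ℕ) (K : Set (Euc n)) : Measure (Euc n) :=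
  (n : ℝ≥0∞)⁻¹ • (surfaceMeasure n K).withDensity fun θ => ENNReal.ofReal (suppFn K θ)

/-- The polar body `K* = {x : ⟨x,y⟩ ≤ 1 ∀ y ∈ K}`. -/
def polarBody {n : ℕ} (K : Set (Euc n)) : Set (Euc n) := {x | ∀ y ∈ K, ⟪x, y⟫ ≤ 1}

/-- The `0`-homogeneous extension to `ℝⁿ \ {0}` of a function on the unit sphere. -/
def zeroHomExt {n : ℕ} (f : Euc n → ℝ) (x : Euc n) : ℝ := f (‖x‖⁻¹ • x)

/-- The spherical gradient `∇̄ f` of a function on the unit sphere (the Euclidean gradient of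
its `0`-homogeneous extension). -/
def sphGrad {n : ℕ} (f : Euc n → ℝ) (θ : Euc n) : Euc n := gradient (zeroHomExt f) θ

/-- Orthogonal projection onto the tangent space `θ^⊥` of the unit sphere at `θ`. -/
def tanProj {n : ℕ} (θ : Euc n) : Euc n →L[ℝ] Euc n :=
  ContinuousLinearMap.id ℝ (Euc n) - (innerSL ℝ θ).smulRight θ

/-- For a `1`-homogeneous `g : ℝⁿ → ℝ` (e.g. `g = h_K`), the endomorphism of `ℝⁿ` acting as the
Hessian `D²g(θ)` (`= ∇̄²g + g δ̄` on `θ^⊥`) on the tangent space of the sphere at `θ`, and as the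
identity in the radial direction. -/
def hessEnd {n : ℕ} (g : Euc n → ℝ) (θ : Euc n) : Module.End ℝ (Euc n) :=
  (((fderiv ℝ (gradient g) θ).comp (tanProj θ)) + (innerSL ℝ θ).smulRight θ).toLinearMap

/-- `|grad_{g_K} f|²_{g_K}(θ) = h_K(θ) ⟨(D̄²h_K)⁻¹ ∇̄f, ∇̄f⟩`, the squared norm of the gradient
of `f` with respect to the centro-affine metric `g_K = (∇̄²h_K + h_K δ̄)/h_K`. -/
def gradNormSqGK (n : ℕ) (K : Set (Euc n)) (f : Euc n → ℝ) (θ : Euc n) : ℝ :=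
  suppFn K θ * ⟪Ring.inverse (hessEnd (suppFn K) θ) (sphGrad f θ), sphGrad f θ⟫

/-- The first non-zero even eigenvalue `λ_{1,e}(-Δ_K)` of the Hilbert–Brunn–Minkowski operator:
the infimum of the Rayleigh quotients `∫ |grad f|²_{g_K} dV_K / ∫ f² dV_K` over non-zero even
`C²` functions `f` on `S^{n-1}` with `∫ f dV_K = 0`. -/
def lambdaOneEven (n : ℕ) (K : Set (Euc n)) : ℝ :=
  sInf { r : ℝ | ∃ f : Euc n → ℝ, ContDiffOn ℝ 2 (zeroHomExt f) {(0 : Euc n)}ᶜ ∧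
    (∀ x, f (-x) = f x) ∧
    (∫ θ, f θ ∂(coneVolumeMeasure n K)) = 0 ∧
    (∫ θ, (f θ) ^ 2 ∂(coneVolumeMeasure n K)) ≠ 0 ∧
    r = (∫ θ, gradNormSqGK n K f θ ∂(coneVolumeMeasure n K)) /
        (∫ θ, (f θ) ^ 2 ∂(coneVolumeMeasure n K)) }

/-- The Hilbert–Brunn–Minkowski operator
`Δ_K f = ((D̄²h_K)⁻¹)^{ij} [∇̄²_{ij}(f h_K) + (f h_K) δ̄_{ij}] - (n-1) f`. -/
def hbmLaplacian (n : ℕ) (K : Set (Euc n)) (f : Euc n → ℝ) (θ : Euc n) : ℝ :=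
  LinearMap.trace ℝ (Euc n)
    ((Ring.inverse (hessEnd (suppFn K) θ)) ∘ₗ
      ((fderiv ℝ (gradient (fun x => zeroHomExt f x * suppFn K x)) θ).comp (tanProj θ)).toLinearMap)
    - ((n : ℝ) - 1) * f θ


/-- The curvature-pinching condition `a·δ ≤ D²(‖x‖_K²/2) ≤ b·δ` (as quadratic forms)
for all `x` in the unit sphere `S^{n-1}`. -/
def HessPinched (n : ℕ) (K : Set (Euc n)) (a b : ℝ) : Prop :=
  ∀ x ∈ sphere (0 : Euc n) 1, ∀ u : Euc n,
    a * ‖u‖ ^ 2 ≤ hess (halfGaugeSq K) x u u ∧ hess (halfGaugeSq K) x u u ≤ b * ‖u‖ ^ 2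

/-- The projection `π_{∂K}(x) : T_x ℝⁿ → T_x ∂K` onto the tangent space of `∂K` at `x`,
parallel to the radial direction `x`. -/
def radialTanProj {n : ℕ} (K : Set (Euc n)) (x u : Euc n) : Euc n :=
  u - (⟪gaussMap K x, u⟫ / ⟪gaussMap K x, x⟫) • x

open scoped Classical in
/-- The `C^{2,r}`-distance between two convex bodies: the `C²`-norm of the difference of their
support functions on the unit sphere, plus the `r`-Hölder seminorm of its second derivative. -/
def c2aDist (n : ℕ) (r : ℝ) (K L : Set (Euc n)) : ℝ :=
  (⨆ θ : sphere (0 : Euc n) 1, |suppFn K ↑θ - suppFn L ↑θ|) +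
  (⨆ θ : sphere (0 : Euc n) 1, ‖fderiv ℝ (suppFn K) ↑θ - fderiv ℝ (suppFn L) ↑θ‖) +
  (⨆ θ : sphere (0 : Euc n) 1,
    ‖fderiv ℝ (fun z => fderiv ℝ (suppFn K) z) ↑θ
      - fderiv ℝ (fun z => fderiv ℝ (suppFn L) z) ↑θ‖) +
  (⨆ q : sphere (0 : Euc n) 1 × sphere (0 : Euc n) 1,
    if (q.1 : Euc n) = q.2 then 0 else
      ‖(fderiv ℝ (fun z => fderiv ℝ (suppFn K) z) ↑q.1
          - fderiv ℝ (fun z => fderiv ℝ (suppFn L) z) ↑q.1)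
        - (fderiv ℝ (fun z => fderiv ℝ (suppFn K) z) ↑q.2
          - fderiv ℝ (fun z => fderiv ℝ (suppFn L) z) ↑q.2)‖ / ‖(q.1 : Euc n) - ↑q.2‖ ^ r)

/-- The family `F_γ` of origin-symmetric `C^{2,r}` convex bodies with strictly positive curvature
admitting, for some `ℓ ∈ GL(n,ℝ)`, a curvature-pinching `a·δ ≤ D²(‖x‖_{ℓK}²/2) ≤ b·δ` on the
unit sphere with ratio `b/a = γ`. -/
def pinchedFamily (n : ℕ) (r γ : ℝ) : Set (Set (Euc n)) :=
  {K | IsC2HolderBody n r K ∧ IsOriginSymmetric K ∧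
    ∃ ℓ : Euc n ≃ₗ[ℝ] Euc n, ∃ a b : ℝ, 0 < a ∧ a ≤ b ∧ b / a = γ ∧
      HessPinched n (⇑ℓ '' K) a b}

namespace AGradAux

open Filter

variable {n : ℕ}

lemma hasDerivAt_line (x : Euc n) (t : ℝ) : HasDerivAt (fun s : ℝ => s • x) x t := by
  simpa using (hasDerivAt_id t).smul_const x

lemma inner_gradient_apply (φ : Euc n → ℝ) (y v : Euc n) :
    ⟪gradient φ y, v⟫ = fderiv ℝ φ y v := by
  rw [gradient, InnerProductSpace.toDual_symm_apply]

lemma gradient_of_hasFDerivAt {φ : Euc n → ℝ} {x g : Euc n}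
    (h : HasFDerivAt φ (innerSL ℝ g) x) : gradient φ x = g := by
  apply ext_inner_right ℝ
  intro v
  rw [inner_gradient_apply, h.fderiv]
  rfl

lemma fderiv_radial {φ : Euc n → ℝ} {x : Euc n} (hd : DifferentiableAt ℝ φ x)
    {ρ : ℝ → ℝ} {ρ' : ℝ} (hρ : HasDerivAt ρ ρ' 1)
    (heq : ∀ᶠ t in nhds (1:ℝ), φ (t • x) = ρ t) : fderiv ℝ φ x x = ρ' := by
  have h1 : HasDerivAt (fun t : ℝ => φ (t • x)) (fderiv ℝ φ x x) 1 := by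
    have h := hd.hasFDerivAt
    rw [show x = (1:ℝ) • x by simp] at h
    have h3 := h.comp_hasDerivAt 1 (hasDerivAt_line x 1)
    simp only [one_smul] at h3
    exact h3
  have h2 : HasDerivAt (fun t : ℝ => φ (t • x)) ρ' 1 := by
    exact hρ.congr_of_eventuallyEq heq
  exact h1.unique h2

lemma fderiv_radial_vec {Φ : Euc n → Euc n} {x : Euc n} (hd : DifferentiableAt ℝ Φ x)
    {ρ : ℝ → Euc n} {ρ' : Euc n} (hρ : HasDerivAt ρ ρ' 1)
    (heq : ∀ᶠ t in nhds (1:ℝ), Φ (t • x) = ρ t) : fderiv ℝ Φ x x = ρ' := by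
  have h1 : HasDerivAt (fun t : ℝ => Φ (t • x)) (fderiv ℝ Φ x x) 1 := by
    have h := hd.hasFDerivAt
    rw [show x = (1:ℝ) • x by simp] at h
    have h3 := h.comp_hasDerivAt 1 (hasDerivAt_line x 1)
    simp only [one_smul] at h3
    exact h3
  have h2 : HasDerivAt (fun t : ℝ => Φ (t • x)) ρ' 1 := hρ.congr_of_eventuallyEq heq
  exact h1.unique h2

lemma fderiv_of_smul_eq {φ : Euc n → ℝ} {x : Euc n} {c m : ℝ} (hc : c ≠ 0)
    (hφ : ∀ y, φ (c • y) = m * φ y) (hd : DifferentiableAt ℝ φ x)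
    (hd' : DifferentiableAt ℝ φ (c • x)) :
    fderiv ℝ φ (c • x) = (m / c) • fderiv ℝ φ x := by
  have hsmul : HasFDerivAt (fun y : Euc n => c • y) (c • ContinuousLinearMap.id ℝ (Euc n)) x := by
    exact (ContinuousLinearMap.id ℝ (Euc n)).hasFDerivAt.const_smul c
  have h1 : HasFDerivAt (fun y => φ (c • y))
      ((fderiv ℝ φ (c • x)).comp (c • ContinuousLinearMap.id ℝ (Euc n))) x :=
    hd'.hasFDerivAt.comp x hsmul
  have h2 : HasFDerivAt (fun y => φ (c • y)) (m • fderiv ℝ φ x) x := by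
    have h := hd.hasFDerivAt.const_mul m
    have : (fun y => φ (c • y)) = fun y => m * φ y := funext hφ
    rw [this]
    simpa using h
  have h3 := h1.unique h2
  have h4 : (fderiv ℝ φ (c • x)).comp (c • ContinuousLinearMap.id ℝ (Euc n))
      = c • fderiv ℝ φ (c • x) := by
    ext v; simp [ContinuousLinearMap.smul_apply, _root_.map_smul, smul_eq_mul, mul_comm]
  rw [h4] at h3
  have := congrArg (fun L => c⁻¹ • L) h3
  simpa [smul_smul, inv_mul_cancel₀ hc, div_eq_mul_inv, mul_comm] using this

lemma fderiv_of_smul_eq_vec {Φ : Euc n → Euc n} {x : Euc n} {c m : ℝ} (hc : c ≠ 0)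
    (hΦ : ∀ᶠ y in nhds x, Φ (c • y) = m • Φ y) (hd : DifferentiableAt ℝ Φ x)
    (hd' : DifferentiableAt ℝ Φ (c • x)) :
    fderiv ℝ Φ (c • x) = (m / c) • fderiv ℝ Φ x := by
  have hsmul : HasFDerivAt (fun y : Euc n => c • y) (c • ContinuousLinearMap.id ℝ (Euc n)) x :=
    (ContinuousLinearMap.id ℝ (Euc n)).hasFDerivAt.const_smul c
  have h1 : HasFDerivAt (fun y => Φ (c • y))
      ((fderiv ℝ Φ (c • x)).comp (c • ContinuousLinearMap.id ℝ (Euc n))) x :=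
    hd'.hasFDerivAt.comp x hsmul
  have h2 : HasFDerivAt (fun y => Φ (c • y)) (m • fderiv ℝ Φ x) x := by
    have h := hd.hasFDerivAt.const_smul m
    exact h.congr_of_eventuallyEq (hΦ.mono fun y hy => hy)
  have h3 := h1.unique h2
  have h4 : (fderiv ℝ Φ (c • x)).comp (c • ContinuousLinearMap.id ℝ (Euc n))
      = c • fderiv ℝ Φ (c • x) := by
    ext v; simp [_root_.map_smul]
  rw [h4] at h3
  have := congrArg (fun L => c⁻¹ • L) h3
  simpa [smul_smul, inv_mul_cancel₀ hc, div_eq_mul_inv, mul_comm] using this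

lemma grad_hessian_symm {φ : Euc n → ℝ} {x : Euc n}
    (hφ : ∀ᶠ y in nhds x, DifferentiableAt ℝ φ y)
    (hd : DifferentiableAt ℝ (gradient φ) x) (u v : Euc n) :
    ⟪fderiv ℝ (gradient φ) x u, v⟫ = ⟪fderiv ℝ (gradient φ) x v, u⟫ := by
  have hf' : ∀ᶠ y in nhds x, HasFDerivAt φ (innerSL ℝ (gradient φ y)) y := by
    filter_upwards [hφ] with y hy
    have h := hy.hasFDerivAt
    exact h.congr_fderiv (ContinuousLinearMap.ext fun w => by
      simp only [innerSL_apply_apply, inner_gradient_apply])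
  have hx : HasFDerivAt (fun y => innerSL ℝ (gradient φ y))
      ((innerSL ℝ (E := Euc n)).comp (fderiv ℝ (gradient φ) x)) x :=
    (innerSL ℝ (E := Euc n)).hasFDerivAt.comp x hd.hasFDerivAt
  have := second_derivative_symmetric_of_eventually_of_real hf' hx u v
  simpa using this

variable {n : ℕ} {K : Set (Euc n)}

lemma K_mem_nhds (h0 : (0:Euc n) ∈ interior K) : K ∈ nhds (0 : Euc n) :=
  mem_interior_iff_mem_nhds.1 h0

lemma absorbent_K (h0 : (0:Euc n) ∈ interior K) : Absorbent ℝ K :=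
  absorbent_nhds_zero (K_mem_nhds h0)

lemma gauge_pos_ne (hKc : IsCompact K) (h0 : (0:Euc n) ∈ interior K)
    {x : Euc n} (hx : x ≠ 0) : 0 < gauge K x := by
  obtain ⟨R, hR⟩ := hKc.isBounded.subset_closedBall 0
  have hR1 : K ⊆ closedBall (0:Euc n) (max R 1) :=
    hR.trans (closedBall_subset_closedBall (le_max_left _ _))
  have h1 : gauge (closedBall (0:Euc n) (max R 1)) x ≤ gauge K x :=
    gauge_mono (absorbent_K h0) hR1 x
  rw [gauge_closedBall (by positivity)] at h1
  have : (0:ℝ) < ‖x‖ / max R 1 := by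
    apply div_pos (norm_pos_iff.2 hx) (lt_of_lt_of_le one_pos (le_max_right _ _))
  linarith

lemma halfGaugeSq_pos (hKc : IsCompact K) (h0 : (0:Euc n) ∈ interior K)
    {x : Euc n} (hx : x ≠ 0) : 0 < halfGaugeSq K x := by
  have := gauge_pos_ne hKc h0 hx
  unfold halfGaugeSq; positivity

lemma gauge_eq_sqrt (K : Set (Euc n)) :
    gauge K = fun y => Real.sqrt (2 * halfGaugeSq K y) := by
  funext y
  unfold halfGaugeSq
  rw [mul_div_cancel₀ _ (two_ne_zero), Real.sqrt_sq (gauge_nonneg _)]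

lemma contDiffAt_gauge (hKc : IsCompact K) (h0 : (0:Euc n) ∈ interior K)
    (hg : ContDiffOn ℝ (⊤:ℕ∞) (halfGaugeSq K) {(0:Euc n)}ᶜ)
    {x : Euc n} (hx : x ≠ 0) : ContDiffAt ℝ (⊤:ℕ∞) (gauge K) x := by
  have hgx : ContDiffAt ℝ (⊤:ℕ∞) (halfGaugeSq K) x :=
    hg.contDiffAt (isOpen_compl_singleton.mem_nhds hx)
  rw [gauge_eq_sqrt K]
  exact (contDiffAt_const.mul hgx).sqrt
    (by have := halfGaugeSq_pos hKc h0 hx; positivity)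

lemma diffAt_gauge (hKc : IsCompact K) (h0 : (0:Euc n) ∈ interior K)
    (hg : ContDiffOn ℝ (⊤:ℕ∞) (halfGaugeSq K) {(0:Euc n)}ᶜ)
    {x : Euc n} (hx : x ≠ 0) : DifferentiableAt ℝ (gauge K) x :=
  (contDiffAt_gauge hKc h0 hg hx).differentiableAt (by simp)

lemma gauge_smul_pos {c : ℝ} (hc : 0 ≤ c) (y : Euc n) :
    gauge K (c • y) = c * gauge K y := by
  rw [gauge_smul_of_nonneg hc, smul_eq_mul]

lemma halfGaugeSq_smul {c : ℝ} (hc : 0 ≤ c) (y : Euc n) :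
    halfGaugeSq K (c • y) = c ^ 2 * halfGaugeSq K y := by
  unfold halfGaugeSq
  rw [gauge_smul_pos hc, mul_pow]
  ring

lemma diffAt_halfGaugeSq (hg : ContDiffOn ℝ (⊤:ℕ∞) (halfGaugeSq K) {(0:Euc n)}ᶜ)
    {x : Euc n} (hx : x ≠ 0) : DifferentiableAt ℝ (halfGaugeSq K) x :=
  (hg.contDiffAt (isOpen_compl_singleton.mem_nhds hx)).differentiableAt (by simp)

lemma hasFDerivAt_halfGaugeSq (hKc : IsCompact K) (h0 : (0:Euc n) ∈ interior K)
    (hg : ContDiffOn ℝ (⊤:ℕ∞) (halfGaugeSq K) {(0:Euc n)}ᶜ)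
    {x : Euc n} (hx : x ≠ 0) :
    HasFDerivAt (halfGaugeSq K) (gauge K x • fderiv ℝ (gauge K) x) x := by
  have hγ := (diffAt_gauge hKc h0 hg hx).hasFDerivAt
  have hsq : HasDerivAt (fun t : ℝ => t ^ 2 / 2) (gauge K x) (gauge K x) := by
    have := (hasDerivAt_pow 2 (gauge K x)).div_const 2
    simpa [pow_one] using this
  have := hsq.comp_hasFDerivAt x hγ
  exact this

lemma grad_halfGaugeSq (hKc : IsCompact K) (h0 : (0:Euc n) ∈ interior K)
    (hg : ContDiffOn ℝ (⊤:ℕ∞) (halfGaugeSq K) {(0:Euc n)}ᶜ)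
    {x : Euc n} (hx : x ≠ 0) :
    gradient (halfGaugeSq K) x = gauge K x • gradient (gauge K) x := by
  apply gradient_of_hasFDerivAt
  have h := hasFDerivAt_halfGaugeSq hKc h0 hg hx
  refine h.congr_fderiv (ContinuousLinearMap.ext fun v => ?_)
  simp only [innerSL_apply_apply, ContinuousLinearMap.smul_apply, smul_eq_mul,
    real_inner_smul_left, inner_gradient_apply]

-- Euler / scaling identities

lemma grad_gauge_smul (hKc : IsCompact K) (h0 : (0:Euc n) ∈ interior K)
    (hg : ContDiffOn ℝ (⊤:ℕ∞) (halfGaugeSq K) {(0:Euc n)}ᶜ)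
    {c : ℝ} (hc : 0 < c) {x : Euc n} (hx : x ≠ 0) :
    gradient (gauge K) (c • x) = gradient (gauge K) x := by
  have hcx : c • x ≠ 0 := smul_ne_zero hc.ne' hx
  have h := fderiv_of_smul_eq (φ := gauge K) (x := x) (c := c) (m := c) hc.ne'
    (fun y => gauge_smul_pos hc.le y) (diffAt_gauge hKc h0 hg hx) (diffAt_gauge hKc h0 hg hcx)
  rw [div_self hc.ne', one_smul] at h
  apply ext_inner_right ℝ
  intro v
  rw [inner_gradient_apply, inner_gradient_apply, h]

lemma grad_halfGaugeSq_smul (hKc : IsCompact K) (h0 : (0:Euc n) ∈ interior K)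
    (hg : ContDiffOn ℝ (⊤:ℕ∞) (halfGaugeSq K) {(0:Euc n)}ᶜ)
    {c : ℝ} (hc : 0 < c) {x : Euc n} (hx : x ≠ 0) :
    gradient (halfGaugeSq K) (c • x) = c • gradient (halfGaugeSq K) x := by
  have hcx : c • x ≠ 0 := smul_ne_zero hc.ne' hx
  have h := fderiv_of_smul_eq (φ := halfGaugeSq K) (x := x) (c := c) (m := c^2) hc.ne'
    (fun y => halfGaugeSq_smul hc.le y) (diffAt_halfGaugeSq hg hx) (diffAt_halfGaugeSq hg hcx)
  have hmc : c ^ 2 / c = c := by field_simp [pow_two]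
  rw [hmc] at h
  apply ext_inner_right ℝ
  intro v
  rw [inner_gradient_apply, real_inner_smul_left, inner_gradient_apply, h]
  simp

lemma inner_grad_gauge_self (hKc : IsCompact K) (h0 : (0:Euc n) ∈ interior K)
    (hg : ContDiffOn ℝ (⊤:ℕ∞) (halfGaugeSq K) {(0:Euc n)}ᶜ)
    {x : Euc n} (hx : x ≠ 0) :
    ⟪gradient (gauge K) x, x⟫ = gauge K x := by
  rw [inner_gradient_apply]
  apply fderiv_radial (diffAt_gauge hKc h0 hg hx) (ρ := fun t => t * gauge K x)
  · simpa using (hasDerivAt_id (1:ℝ)).mul_const (gauge K x)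
  · filter_upwards [eventually_gt_nhds one_pos] with t ht
    exact gauge_smul_pos ht.le x

lemma inner_grad_halfGaugeSq_self (hKc : IsCompact K) (h0 : (0:Euc n) ∈ interior K)
    (hg : ContDiffOn ℝ (⊤:ℕ∞) (halfGaugeSq K) {(0:Euc n)}ᶜ)
    {x : Euc n} (hx : x ≠ 0) :
    ⟪gradient (halfGaugeSq K) x, x⟫ = 2 * halfGaugeSq K x := by
  rw [inner_gradient_apply]
  apply fderiv_radial (diffAt_halfGaugeSq hg hx) (ρ := fun t => t ^ 2 * halfGaugeSq K x)
  · have := (hasDerivAt_pow 2 (1:ℝ)).mul_const (halfGaugeSq K x)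
    simpa using this
  · filter_upwards [eventually_gt_nhds one_pos] with t ht
    exact halfGaugeSq_smul ht.le x

-- differentiability of gradient maps

lemma diffAt_grad {φ : Euc n → ℝ} {x : Euc n} (hφ : ContDiffAt ℝ (⊤:ℕ∞) φ x) :
    DifferentiableAt ℝ (gradient φ) x := by
  have hφ2 : ContDiffAt ℝ 2 φ x := contDiffAt_infty.1 hφ 2
  have hdf : ContDiffAt ℝ 1 (fderiv ℝ φ) x := hφ2.fderiv_right (by norm_cast)
  have : gradient φ = fun y => (InnerProductSpace.toDual ℝ (Euc n)).symm (fderiv ℝ φ y) := rfl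
  rw [this]
  exact ((InnerProductSpace.toDual ℝ (Euc n)).symm.toContinuousLinearEquiv.differentiableAt).comp x
    (hdf.differentiableAt one_ne_zero)

lemma contDiffAt_grad_gauge (hKc : IsCompact K) (h0 : (0:Euc n) ∈ interior K)
    (hg : ContDiffOn ℝ (⊤:ℕ∞) (halfGaugeSq K) {(0:Euc n)}ᶜ)
    {x : Euc n} (hx : x ≠ 0) : DifferentiableAt ℝ (gradient (gauge K)) x :=
  diffAt_grad (contDiffAt_gauge hKc h0 hg hx)

lemma diffAt_grad_halfGaugeSq (hg : ContDiffOn ℝ (⊤:ℕ∞) (halfGaugeSq K) {(0:Euc n)}ᶜ)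
    {x : Euc n} (hx : x ≠ 0) : DifferentiableAt ℝ (gradient (halfGaugeSq K)) x :=
  diffAt_grad (hg.contDiffAt (isOpen_compl_singleton.mem_nhds hx))

-- product rule : hessian of halfGaugeSq in terms of gauge

lemma hasFDerivAt_grad_halfGaugeSq (hKc : IsCompact K) (h0 : (0:Euc n) ∈ interior K)
    (hg : ContDiffOn ℝ (⊤:ℕ∞) (halfGaugeSq K) {(0:Euc n)}ᶜ)
    {x : Euc n} (hx : x ≠ 0) :
    HasFDerivAt (gradient (halfGaugeSq K))
      (gauge K x • fderiv ℝ (gradient (gauge K)) x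
        + (fderiv ℝ (gauge K) x).smulRight (gradient (gauge K) x)) x := by
  have hγd := diffAt_gauge hKc h0 hg hx
  have hΓd := contDiffAt_grad_gauge hKc h0 hg hx
  have h := hγd.hasFDerivAt.smul hΓd.hasFDerivAt
  apply h.congr_of_eventuallyEq
  filter_upwards [isOpen_compl_singleton.mem_nhds hx] with y hy
  exact grad_halfGaugeSq hKc h0 hg hy

lemma fderiv_grad_halfGaugeSq_apply (hKc : IsCompact K) (h0 : (0:Euc n) ∈ interior K)
    (hg : ContDiffOn ℝ (⊤:ℕ∞) (halfGaugeSq K) {(0:Euc n)}ᶜ)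
    {x : Euc n} (hx : x ≠ 0) (u : Euc n) :
    fderiv ℝ (gradient (halfGaugeSq K)) x u
      = gauge K x • fderiv ℝ (gradient (gauge K)) x u
        + ⟪gradient (gauge K) x, u⟫ • gradient (gauge K) x := by
  rw [(hasFDerivAt_grad_halfGaugeSq hKc h0 hg hx).fderiv]
  simp only [ContinuousLinearMap.add_apply, ContinuousLinearMap.coe_smul',
    Pi.smul_apply, ContinuousLinearMap.smulRight_apply]
  rw [inner_gradient_apply]

-- second Euler identities

lemma fderiv_grad_halfGaugeSq_self (hKc : IsCompact K) (h0 : (0:Euc n) ∈ interior K)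
    (hg : ContDiffOn ℝ (⊤:ℕ∞) (halfGaugeSq K) {(0:Euc n)}ᶜ)
    {x : Euc n} (hx : x ≠ 0) :
    fderiv ℝ (gradient (halfGaugeSq K)) x x = gradient (halfGaugeSq K) x := by
  apply fderiv_radial_vec (diffAt_grad_halfGaugeSq hg hx)
    (ρ := fun t => t • gradient (halfGaugeSq K) x)
  · simpa using (hasDerivAt_id (1:ℝ)).smul_const (gradient (halfGaugeSq K) x)
  · filter_upwards [eventually_gt_nhds one_pos] with t ht
    exact grad_halfGaugeSq_smul hKc h0 hg ht hx

lemma fderiv_grad_gauge_self (hKc : IsCompact K) (h0 : (0:Euc n) ∈ interior K)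
    (hg : ContDiffOn ℝ (⊤:ℕ∞) (halfGaugeSq K) {(0:Euc n)}ᶜ)
    {x : Euc n} (hx : x ≠ 0) :
    fderiv ℝ (gradient (gauge K)) x x = 0 := by
  apply fderiv_radial_vec (contDiffAt_grad_gauge hKc h0 hg hx)
    (ρ := fun _ : ℝ => gradient (gauge K) x)
  · exact hasDerivAt_const 1 _
  · filter_upwards [eventually_gt_nhds one_pos] with t ht
    exact grad_gauge_smul hKc h0 hg ht hx

-- hessian scaling

lemma fderiv_grad_halfGaugeSq_smul (hKc : IsCompact K) (h0 : (0:Euc n) ∈ interior K)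
    (hg : ContDiffOn ℝ (⊤:ℕ∞) (halfGaugeSq K) {(0:Euc n)}ᶜ)
    {c : ℝ} (hc : 0 < c) {x : Euc n} (hx : x ≠ 0) :
    fderiv ℝ (gradient (halfGaugeSq K)) (c • x) = fderiv ℝ (gradient (halfGaugeSq K)) x := by
  have hcx : c • x ≠ 0 := smul_ne_zero hc.ne' hx
  have h := fderiv_of_smul_eq_vec (Φ := gradient (halfGaugeSq K)) (x := x) (c := c) (m := c)
    hc.ne' ?_ (diffAt_grad_halfGaugeSq hg hx) (diffAt_grad_halfGaugeSq hg hcx)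
  · rw [div_self hc.ne', one_smul] at h
    exact h
  · filter_upwards [isOpen_compl_singleton.mem_nhds hx] with y hy
    exact grad_halfGaugeSq_smul hKc h0 hg hc hy

-- convexity

lemma convexOn_gauge (hKconv : Convex ℝ K) (h0 : (0:Euc n) ∈ interior K) :
    ConvexOn ℝ univ (gauge K) := by
  refine ⟨convex_univ, fun x _ y _ a b ha hb hab => ?_⟩
  calc gauge K (a • x + b • y) ≤ gauge K (a • x) + gauge K (b • y) :=
        gauge_add_le hKconv (absorbent_K h0) _ _
    _ = a * gauge K x + b * gauge K y := by rw [gauge_smul_pos ha, gauge_smul_pos hb]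
    _ = a • gauge K x + b • gauge K y := rfl

lemma convexOn_halfGaugeSq (hKconv : Convex ℝ K) (h0 : (0:Euc n) ∈ interior K) :
    ConvexOn ℝ univ (halfGaugeSq K) := by
  refine ⟨convex_univ, fun x _ y _ a b ha hb hab => ?_⟩
  have h1 : gauge K (a • x + b • y) ≤ a * gauge K x + b * gauge K y :=
    (convexOn_gauge hKconv h0).2 (mem_univ x) (mem_univ y) ha hb hab
  have h2 : gauge K (a • x + b • y) ^ 2 ≤ (a * gauge K x + b * gauge K y) ^ 2 := by
    apply pow_le_pow_left₀ (gauge_nonneg _) h1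
  have hx0 := gauge_nonneg (s := K) x
  have hy0 := gauge_nonneg (s := K) y
  simp only [halfGaugeSq, smul_eq_mul]
  nlinarith [sq_nonneg (gauge K x - gauge K y), mul_nonneg ha hb]

lemma convex_grad_ineq {φ : Euc n → ℝ} (hconv : ConvexOn ℝ univ φ) {x w : Euc n}
    (hd : DifferentiableAt ℝ φ x) :
    φ x + ⟪gradient φ x, w - x⟫ ≤ φ w := by
  rcases eq_or_ne w x with rfl | hne
  · simp
  set ξ : ℝ → ℝ := fun t => φ (t • (w - x) + x) with hξdef
  have hconvξ : ConvexOn ℝ univ ξ := by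
    have := hconv.comp_affineMap (AffineMap.lineMap x w)
    have heq : (φ ∘ (AffineMap.lineMap x w)) = ξ := by
      funext t
      simp only [Function.comp_apply, AffineMap.lineMap_apply_module, ξ]
      congr 1
      module
    rw [heq] at this
    simpa using this
  have hcurve : HasDerivAt (fun t : ℝ => t • (w - x) + x) (w - x) 0 := by
    simpa using ((hasDerivAt_id (0:ℝ)).smul_const (w - x)).add_const x
  have hξd : HasDerivAt ξ ⟪gradient φ x, w - x⟫ 0 := by
    have h := hd.hasFDerivAt
    rw [show x = (0:ℝ) • (w - x) + x by simp] at h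
    have := h.comp_hasDerivAt 0 hcurve
    rw [inner_gradient_apply]
    simp only [zero_smul, zero_add] at this
    exact this
  have hslope := hconvξ.le_slope_of_hasDerivAt (mem_univ (0:ℝ)) (mem_univ (1:ℝ)) one_pos hξd
  rw [slope_def_field] at hslope
  have h0' : ξ 0 = φ x := by simp [ξ]
  have h1' : ξ 1 = φ w := by simp [ξ]
  rw [h0', h1'] at hslope
  simp only [sub_zero, div_one] at hslope
  linarith


-- positivity of the Hessian of halfGaugeSq

lemma grad_gauge_ne_zero (hKc : IsCompact K) (h0 : (0:Euc n) ∈ interior K)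
    (hg : ContDiffOn ℝ (⊤:ℕ∞) (halfGaugeSq K) {(0:Euc n)}ᶜ)
    {x : Euc n} (hx : x ≠ 0) : gradient (gauge K) x ≠ 0 := by
  intro h
  have h1 := inner_grad_gauge_self hKc h0 hg hx
  rw [h, inner_zero_left] at h1
  exact (gauge_pos_ne hKc h0 hx).ne h1

lemma hasFDerivAt_gaussMap (hKc : IsCompact K) (h0 : (0:Euc n) ∈ interior K)
    (hg : ContDiffOn ℝ (⊤:ℕ∞) (halfGaugeSq K) {(0:Euc n)}ᶜ)
    {x : Euc n} (hx : x ≠ 0) :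
    HasFDerivAt (gaussMap K)
      (‖gradient (gauge K) x‖⁻¹ • fderiv ℝ (gradient (gauge K)) x
        + (fderiv ℝ (fun y => ‖gradient (gauge K) y‖⁻¹) x).smulRight
            (gradient (gauge K) x)) x := by
  have hΓ := contDiffAt_grad_gauge hKc h0 hg hx
  have hcd : DifferentiableAt ℝ (fun y => ‖gradient (gauge K) y‖⁻¹) x :=
    ((hΓ.norm ℝ (grad_gauge_ne_zero hKc h0 hg hx)).inv
      (norm_ne_zero_iff.2 (grad_gauge_ne_zero hKc h0 hg hx)))
  have h := hcd.hasFDerivAt.smul hΓ.hasFDerivAt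
  exact h

lemma secondFF_tangent (hKc : IsCompact K) (h0 : (0:Euc n) ∈ interior K)
    (hg : ContDiffOn ℝ (⊤:ℕ∞) (halfGaugeSq K) {(0:Euc n)}ᶜ)
    {x : Euc n} (hx : x ≠ 0) {u : Euc n} (hu : ⟪gradient (gauge K) x, u⟫ = 0) :
    ⟪fderiv ℝ (gradient (gauge K)) x u, u⟫ = ‖gradient (gauge K) x‖ * secondFF K x u u := by
  have h := (hasFDerivAt_gaussMap hKc h0 hg hx).fderiv
  have hne := grad_gauge_ne_zero hKc h0 hg hx
  unfold secondFF
  rw [h]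
  simp only [ContinuousLinearMap.add_apply, ContinuousLinearMap.coe_smul', Pi.smul_apply,
    ContinuousLinearMap.smulRight_apply]
  rw [inner_add_left, real_inner_smul_left, real_inner_smul_left, hu, mul_zero, add_zero,
    ← mul_assoc, mul_inv_cancel₀ (norm_ne_zero_iff.2 hne), one_mul]

lemma posdef_frontier (hKc : IsCompact K) (hKconv : Convex ℝ K)
    (h0 : (0:Euc n) ∈ interior K)
    (hg : ContDiffOn ℝ (⊤:ℕ∞) (halfGaugeSq K) {(0:Euc n)}ᶜ)
    (hII : ∀ x ∈ frontier K, ∀ u : Euc n, ⟪gaussMap K x, u⟫ = 0 → u ≠ 0 →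
      0 < secondFF K x u u)
    {x : Euc n} (hx1 : gauge K x = 1) {u : Euc n} (hu : u ≠ 0) :
    0 < ⟪fderiv ℝ (gradient (halfGaugeSq K)) x u, u⟫ := by
  have hx : x ≠ 0 := by
    intro h; rw [h, gauge_zero] at hx1; exact zero_ne_one hx1
  have hγx : ⟪gradient (gauge K) x, x⟫ = 1 := by
    rw [inner_grad_gauge_self hKc h0 hg hx, hx1]
  set G := gradient (gauge K) x with hG
  set a := ⟪G, u⟫ with ha
  set w := u - a • x with hw
  have hwt : ⟪G, w⟫ = 0 := by
    rw [hw, inner_sub_right, real_inner_smul_right, hγx, mul_one, sub_self]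
  have hAu : fderiv ℝ (gradient (halfGaugeSq K)) x u
      = fderiv ℝ (gradient (gauge K)) x u + a • G := by
    rw [fderiv_grad_halfGaugeSq_apply hKc h0 hg hx, hx1, one_smul]
  have hAγx : fderiv ℝ (gradient (gauge K)) x x = 0 := fderiv_grad_gauge_self hKc h0 hg hx
  have hsymm : ∀ p q : Euc n, ⟪fderiv ℝ (gradient (gauge K)) x p, q⟫
      = ⟪fderiv ℝ (gradient (gauge K)) x q, p⟫ := by
    intro p q
    apply grad_hessian_symm ?_ (contDiffAt_grad_gauge hKc h0 hg hx)
    filter_upwards [isOpen_compl_singleton.mem_nhds hx] with y hy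
    exact diffAt_gauge hKc h0 hg hy
  have hgw : fderiv ℝ (gradient (gauge K)) x u = fderiv ℝ (gradient (gauge K)) x w := by
    have : u = w + a • x := by rw [hw]; abel
    rw [this, map_add, _root_.map_smul, hAγx, smul_zero, add_zero]
  have hkey : ⟪fderiv ℝ (gradient (halfGaugeSq K)) x u, u⟫
      = ⟪fderiv ℝ (gradient (gauge K)) x w, w⟫ + a ^ 2 := by
    rw [hAu, hgw, inner_add_left]
    have hu_dec : (u : Euc n) = w + a • x := by rw [hw]; abel
    rw [hu_dec, inner_add_right, real_inner_smul_right,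
      hsymm w x, hAγx, inner_zero_left, mul_zero, add_zero]
    rw [inner_add_right, real_inner_smul_left, real_inner_smul_left, hwt, mul_zero,
      real_inner_smul_right, hγx]
    ring
  rcases eq_or_ne w 0 with hw0 | hw0
  · have ha0 : a ≠ 0 := by
      intro h
      apply hu
      have hdec : u = w + a • x := by rw [hw]; abel
      rw [hdec, hw0, h, zero_smul, add_zero]
    rw [hkey, hw0]
    rw [map_zero, inner_zero_left, zero_add]
    exact lt_of_le_of_ne (sq_nonneg a) (Ne.symm (pow_ne_zero 2 ha0))
  · have hfr : x ∈ frontier K :=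
      (gauge_eq_one_iff_mem_frontier hKconv (K_mem_nhds h0)).1 hx1
    have htan : ⟪gaussMap K x, w⟫ = 0 := by
      unfold gaussMap
      rw [real_inner_smul_left, ← hG, hwt, mul_zero]
    have hpos := hII x hfr w htan hw0
    have h2 := secondFF_tangent hKc h0 hg hx hwt
    rw [hkey, h2]
    have hGpos : 0 < ‖G‖ := norm_pos_iff.2 (grad_gauge_ne_zero hKc h0 hg hx)
    nlinarith [sq_nonneg a]

lemma posdef (hKc : IsCompact K) (hKconv : Convex ℝ K)
    (h0 : (0:Euc n) ∈ interior K)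
    (hg : ContDiffOn ℝ (⊤:ℕ∞) (halfGaugeSq K) {(0:Euc n)}ᶜ)
    (hII : ∀ x ∈ frontier K, ∀ u : Euc n, ⟪gaussMap K x, u⟫ = 0 → u ≠ 0 →
      0 < secondFF K x u u)
    {x : Euc n} (hx : x ≠ 0) {u : Euc n} (hu : u ≠ 0) :
    0 < ⟪fderiv ℝ (gradient (halfGaugeSq K)) x u, u⟫ := by
  set c := gauge K x with hc
  have hcpos : 0 < c := gauge_pos_ne hKc h0 hx
  set x' := c⁻¹ • x with hx'
  have hx'ne : x' ≠ 0 := smul_ne_zero (inv_ne_zero hcpos.ne') hx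
  have hγx' : gauge K x' = 1 := by
    rw [hx', gauge_smul_pos (inv_nonneg.2 hcpos.le), ← hc, inv_mul_cancel₀ hcpos.ne']
  have hxx : x = c • x' := by rw [hx', smul_inv_smul₀ hcpos.ne']
  have heq : fderiv ℝ (gradient (halfGaugeSq K)) x = fderiv ℝ (gradient (halfGaugeSq K)) x' := by
    rw [hxx]
    exact fderiv_grad_halfGaugeSq_smul hKc h0 hg hcpos hx'ne
  rw [heq]
  exact posdef_frontier hKc hKconv h0 hg hII hγx' hu

-- the maximizer of the support function

lemma exists_maximizer (hKc : IsCompact K) (hKconv : Convex ℝ K)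
    (h0 : (0:Euc n) ∈ interior K)
    (hg : ContDiffOn ℝ (⊤:ℕ∞) (halfGaugeSq K) {(0:Euc n)}ᶜ)
    {θ : Euc n} (hθ : ‖θ‖ = 1) :
    ∃ x₀, x₀ ∈ K ∧ suppFn K θ = ⟪θ, x₀⟫ ∧ gauge K x₀ = 1 ∧ 0 < suppFn K θ ∧
      gradient (gauge K) x₀ = (suppFn K θ)⁻¹ • θ := by
  have h0K : (0:Euc n) ∈ K := interior_subset h0
  have hcont : ContinuousOn (fun y : Euc n => ⟪θ, y⟫) K := (innerSL ℝ θ).continuous.continuousOn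
  obtain ⟨x₀, hx₀K, hmax⟩ := hKc.exists_isMaxOn ⟨0, h0K⟩ hcont
  have hub : ∀ r ∈ (fun y => ⟪θ, y⟫) '' K, r ≤ ⟪θ, x₀⟫ := by
    rintro r ⟨z, hz, rfl⟩
    exact hmax hz
  have hsupp : suppFn K θ = ⟪θ, x₀⟫ := by
    unfold suppFn
    exact IsGreatest.csSup_eq ⟨⟨x₀, hx₀K, rfl⟩, hub⟩
  -- positivity
  obtain ⟨ε, hε, hball⟩ := Metric.mem_nhds_iff.1 (K_mem_nhds h0)
  have hθθ : ⟪θ, θ⟫ = 1 := by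
    rw [real_inner_self_eq_norm_sq, hθ]; norm_num
  have hzK : (ε/2) • θ ∈ K := by
    apply hball
    rw [mem_ball_zero_iff, norm_smul, hθ, mul_one]
    rw [Real.norm_eq_abs, abs_of_pos (by linarith)]
    linarith
  have hpos : 0 < suppFn K θ := by
    rw [hsupp]
    calc (0:ℝ) < ε/2 := by linarith
      _ = ⟪θ, (ε/2) • θ⟫ := by rw [real_inner_smul_right, hθθ, mul_one]
      _ ≤ ⟪θ, x₀⟫ := hmax hzK
  set s := suppFn K θ with hs
  -- gauge x₀ = 1
  have hgauge_le : gauge K x₀ ≤ 1 := gauge_le_one_of_mem hx₀K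
  have hgauge : gauge K x₀ = 1 := by
    by_contra hne
    have hlt : gauge K x₀ < 1 := lt_of_le_of_ne hgauge_le hne
    have hint : x₀ ∈ interior K := (gauge_lt_one_iff_mem_interior hKconv (K_mem_nhds h0)).1 hlt
    obtain ⟨δ, hδ, hball'⟩ := Metric.mem_nhds_iff.1 (mem_interior_iff_mem_nhds.1 hint)
    have hzK' : x₀ + (δ/2) • θ ∈ K := by
      apply hball'
      rw [mem_ball_iff_norm, add_sub_cancel_left, norm_smul, hθ, mul_one,
        Real.norm_eq_abs, abs_of_pos (by linarith)]
      linarith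
    have h5 : ⟪θ, x₀ + (δ/2) • θ⟫ ≤ ⟪θ, x₀⟫ := hmax hzK'
    simp only [inner_add_right, real_inner_smul_right, hθθ, mul_one] at h5
    linarith
  have hx₀ne : x₀ ≠ 0 := by
    intro h; rw [h, gauge_zero] at hgauge; exact zero_ne_one hgauge
  -- the gradient of the gauge at x₀
  have hφ0 : ∀ z, 0 ≤ s * gauge K z - ⟪θ, z⟫ := by
    intro z
    rcases eq_or_ne z 0 with rfl | hz
    · simp
    · have hc : 0 < gauge K z := gauge_pos_ne hKc h0 hz
      have hmem : (gauge K z)⁻¹ • z ∈ K := by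
        have h1 : gauge K ((gauge K z)⁻¹ • z) ≤ 1 := by
          rw [gauge_smul_pos (inv_nonneg.2 hc.le), inv_mul_cancel₀ hc.ne']
        have h2 := (gauge_le_one_iff_mem_closure hKconv (K_mem_nhds h0)).1 h1
        rwa [hKc.isClosed.closure_eq] at h2
      have h3 : ⟪θ, (gauge K z)⁻¹ • z⟫ ≤ s := by
        rw [hsupp]; exact hmax hmem
      rw [real_inner_smul_right] at h3
      have h4 : ⟪θ, z⟫ ≤ gauge K z * s := by
        rw [← inv_mul_le_iff₀ hc]
        linarith
      nlinarith
  have hφx₀ : s * gauge K x₀ - ⟪θ, x₀⟫ = 0 := by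
    rw [hgauge, mul_one, hsupp]
    ring
  have hlm : IsLocalMin (fun z => s * gauge K z - ⟪θ, z⟫) x₀ :=
    Filter.Eventually.of_forall (fun y => by
      show s * gauge K x₀ - ⟪θ, x₀⟫ ≤ s * gauge K y - ⟪θ, y⟫
      rw [hφx₀]; exact hφ0 y)
  have hφd : HasFDerivAt (fun z => s * gauge K z - ⟪θ, z⟫)
      (s • fderiv ℝ (gauge K) x₀ - innerSL ℝ θ) x₀ := by
    exact ((diffAt_gauge hKc h0 hg hx₀ne).hasFDerivAt.const_mul s).sub (innerSL ℝ θ).hasFDerivAt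
  have hzero := hlm.hasFDerivAt_eq_zero hφd
  refine ⟨x₀, hx₀K, hsupp, hgauge, hpos, ?_⟩
  apply ext_inner_right ℝ
  intro v
  have hv := congrArg (fun L => L v) hzero
  simp only [ContinuousLinearMap.sub_apply, ContinuousLinearMap.smul_apply,
    ContinuousLinearMap.zero_apply, smul_eq_mul, innerSL_apply_apply] at hv
  rw [inner_gradient_apply, real_inner_smul_left]
  have : fderiv ℝ (gauge K) x₀ v = s⁻¹ * ⟪θ, v⟫ := by
    field_simp at hv ⊢
    linarith
  rw [this]

-- suppFn via the gradient of halfGaugeSq (Legendre duality)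

lemma suppFn_eq_gauge_of_grad (hKc : IsCompact K) (hKconv : Convex ℝ K)
    (h0 : (0:Euc n) ∈ interior K)
    (hg : ContDiffOn ℝ (⊤:ℕ∞) (halfGaugeSq K) {(0:Euc n)}ᶜ)
    {y x₁ : Euc n} (hx₁ : x₁ ≠ 0)
    (hgrad : gradient (halfGaugeSq K) x₁ = y) : suppFn K y = gauge K x₁ := by
  set c := gauge K x₁ with hcdef
  have hc : 0 < c := gauge_pos_ne hKc h0 hx₁
  have hgx₁ : halfGaugeSq K x₁ = c ^ 2 / 2 := rfl
  have hyx₁ : ⟪y, x₁⟫ = c ^ 2 := by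
    rw [← hgrad, inner_grad_halfGaugeSq_self hKc h0 hg hx₁, hgx₁]
    ring
  have hub : ∀ r ∈ (fun z => ⟪y, z⟫) '' K, r ≤ c := by
    rintro r ⟨z, hz, rfl⟩
    have hzg : gauge K z ≤ 1 := gauge_le_one_of_mem hz
    have hineq := convex_grad_ineq (convexOn_halfGaugeSq hKconv h0)
      (diffAt_halfGaugeSq hg hx₁) (w := c • z)
    rw [hgrad] at hineq
    have hgz : halfGaugeSq K (c • z) ≤ c ^ 2 / 2 := by
      rw [halfGaugeSq_smul hc.le]
      have h1 : halfGaugeSq K z ≤ 1 / 2 := by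
        unfold halfGaugeSq
        nlinarith [gauge_nonneg (s := K) z]
      nlinarith [sq_nonneg c]
    rw [inner_sub_right, real_inner_smul_right, hyx₁, hgx₁] at hineq
    nlinarith
  have hmem : c⁻¹ • x₁ ∈ K := by
    have h1 : gauge K (c⁻¹ • x₁) ≤ 1 := by
      rw [gauge_smul_pos (inv_nonneg.2 hc.le), ← hcdef, inv_mul_cancel₀ hc.ne']
    have h2 := (gauge_le_one_iff_mem_closure hKconv (K_mem_nhds h0)).1 h1
    rwa [hKc.isClosed.closure_eq] at h2
  have hval : ⟪y, c⁻¹ • x₁⟫ = c := by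
    rw [real_inner_smul_right, hyx₁]
    field_simp
  unfold suppFn
  exact IsGreatest.csSup_eq ⟨⟨c⁻¹ • x₁, hmem, hval⟩, hub⟩

lemma contDiffAt_grad_one {φ : Euc n → ℝ} {x : Euc n} (hφ : ContDiffAt ℝ (⊤:ℕ∞) φ x) :
    ContDiffAt ℝ 1 (gradient φ) x := by
  have hφ2 : ContDiffAt ℝ 2 φ x := contDiffAt_infty.1 hφ 2
  have hdf : ContDiffAt ℝ 1 (fderiv ℝ φ) x := hφ2.fderiv_right (by norm_cast)
  have : gradient φ = fun y => (InnerProductSpace.toDual ℝ (Euc n)).symm (fderiv ℝ φ y) := rfl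
  rw [this]
  exact ((InnerProductSpace.toDual ℝ (Euc n)).symm.contDiff.contDiffAt).comp x hdf

-- the main structural lemma: the gradient of the support function

lemma grad_suppFn_spec (hKc : IsCompact K) (hKconv : Convex ℝ K)
    (h0 : (0:Euc n) ∈ interior K)
    (hg : ContDiffOn ℝ (⊤:ℕ∞) (halfGaugeSq K) {(0:Euc n)}ᶜ)
    (hII : ∀ x ∈ frontier K, ∀ u : Euc n, ⟪gaussMap K x, u⟫ = 0 → u ≠ 0 →
      0 < secondFF K x u u)
    {θ : Euc n} (hθ : ‖θ‖ = 1) :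
    0 < suppFn K θ ∧ gauge K (gradient (suppFn K) θ) = 1 ∧
    ⟪θ, gradient (suppFn K) θ⟫ = suppFn K θ ∧
    gradient (gauge K) (gradient (suppFn K) θ) = (suppFn K θ)⁻¹ • θ := by
  obtain ⟨x₀, hx₀K, hsupp, hgauge, hpos, hgradγ⟩ := exists_maximizer hKc hKconv h0 hg hθ
  set s := suppFn K θ with hs
  have hx₀ne : x₀ ≠ 0 := by
    intro h; rw [h, gauge_zero] at hgauge; exact zero_ne_one hgauge
  set x₁ := s • x₀ with hx₁def
  have hx₁ne : x₁ ≠ 0 := smul_ne_zero hpos.ne' hx₀ne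
  have hγx₁ : gauge K x₁ = s := by
    rw [hx₁def, gauge_smul_pos hpos.le, hgauge, mul_one]
  have hgradγx₁ : gradient (gauge K) x₁ = s⁻¹ • θ := by
    rw [hx₁def, grad_gauge_smul hKc h0 hg hpos hx₀ne, hgradγ]
  have hgradg : gradient (halfGaugeSq K) x₁ = θ := by
    rw [grad_halfGaugeSq hKc h0 hg hx₁ne, hγx₁, hgradγx₁, smul_smul,
      mul_inv_cancel₀ hpos.ne', one_smul]
  -- the Hessian at x₁ as a continuous linear equivalence
  set A := fderiv ℝ (gradient (halfGaugeSq K)) x₁ with hA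
  have hinj : Function.Injective A := by
    intro u v huv
    by_contra hne
    have hsub : A (u - v) = 0 := by rw [map_sub, huv, sub_self]
    have := posdef hKc hKconv h0 hg hII hx₁ne (sub_ne_zero.2 hne)
    rw [← hA, hsub, inner_zero_left] at this
    exact lt_irrefl 0 this
  have hbij : Function.Bijective (A : Euc n →ₗ[ℝ] Euc n) :=
    ⟨hinj, LinearMap.injective_iff_surjective.1 hinj⟩
  set e : Euc n ≃L[ℝ] Euc n :=
    (LinearEquiv.ofBijective (A : Euc n →ₗ[ℝ] Euc n) hbij).toContinuousLinearEquiv with he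
  have hecoe : ∀ v, e v = A v := fun v => rfl
  have hcoe : (e : Euc n →L[ℝ] Euc n) = A := ContinuousLinearMap.ext fun v => rfl
  have hstrict : HasStrictFDerivAt (gradient (halfGaugeSq K)) (e : Euc n →L[ℝ] Euc n) x₁ := by
    rw [hcoe, hA]
    exact (contDiffAt_grad_one (hg.contDiffAt
      (isOpen_compl_singleton.mem_nhds hx₁ne))).hasStrictFDerivAt one_ne_zero
  set ψ := hstrict.localInverse _ _ _ with hψ
  have hψθ : ψ θ = x₁ := by
    have := hstrict.localInverse_apply_image
    rwa [hgradg] at this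
  have hψcont : ContinuousAt ψ θ := by
    have := hstrict.localInverse_continuousAt
    rwa [hgradg] at this
  have hright : ∀ᶠ y' in nhds θ, gradient (halfGaugeSq K) (ψ y') = y' := by
    have := hstrict.eventually_right_inverse
    rwa [hgradg] at this
  have hne0 : ∀ᶠ y' in nhds θ, ψ y' ≠ 0 := by
    have := hψcont.eventually_mem (isOpen_compl_singleton.mem_nhds (by rw [hψθ]; exact hx₁ne))
    simpa using this
  have heventually : suppFn K =ᶠ[nhds θ] fun y' => gauge K (ψ y') := by
    filter_upwards [hright, hne0] with y' h1 h2
    exact suppFn_eq_gauge_of_grad hKc hKconv h0 hg h2 h1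
  have hinv : HasFDerivAt ψ ((e.symm : Euc n →L[ℝ] Euc n)) θ := by
    have := hstrict.to_localInverse.hasFDerivAt
    rwa [hgradg] at this
  have hγx₁d : HasFDerivAt (gauge K) (fderiv ℝ (gauge K) x₁) (ψ θ) := by
    rw [hψθ]
    exact (diffAt_gauge hKc h0 hg hx₁ne).hasFDerivAt
  have hcomp : HasFDerivAt (fun y' => gauge K (ψ y'))
      ((fderiv ℝ (gauge K) x₁).comp (e.symm : Euc n →L[ℝ] Euc n)) θ :=
    hγx₁d.comp θ hinv
  have hsymm : ∀ p q : Euc n, ⟪A p, q⟫ = ⟪A q, p⟫ := by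
    intro p q
    apply grad_hessian_symm ?_ (diffAt_grad_halfGaugeSq hg hx₁ne)
    filter_upwards [isOpen_compl_singleton.mem_nhds hx₁ne] with z hz
    exact diffAt_halfGaugeSq hg hz
  have hAx₁ : A x₁ = θ := by
    rw [hA, fderiv_grad_halfGaugeSq_self hKc h0 hg hx₁ne, hgradg]
  have hCLM : (fderiv ℝ (gauge K) x₁).comp (e.symm : Euc n →L[ℝ] Euc n) = innerSL ℝ x₀ := by
    ext v
    have h1 : fderiv ℝ (gauge K) x₁ (e.symm v) = ⟪gradient (gauge K) x₁, e.symm v⟫ :=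
      (inner_gradient_apply _ _ _).symm
    have h2 : ⟪θ, (e.symm v : Euc n)⟫ = ⟪v, x₁⟫ := by
      rw [← hAx₁, hsymm x₁ (e.symm v)]
      congr 1
      have := hecoe (e.symm v)
      rw [← this, e.apply_symm_apply]
    have h3 : ⟪v, (x₁ : Euc n)⟫ = s * ⟪v, x₀⟫ := by
      rw [hx₁def, real_inner_smul_right]
    simp only [ContinuousLinearMap.coe_comp', Function.comp_apply, innerSL_apply_apply,
      ContinuousLinearEquiv.coe_coe]
    rw [h1, hgradγx₁, real_inner_smul_left, h2, h3, ← mul_assoc,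
      inv_mul_cancel₀ hpos.ne', one_mul, real_inner_comm]
  have hsuppd : HasFDerivAt (suppFn K) (innerSL ℝ x₀) θ := by
    rw [← hCLM]
    exact hcomp.congr_of_eventuallyEq heventually
  have hgradsupp : gradient (suppFn K) θ = x₀ := gradient_of_hasFDerivAt hsuppd
  rw [hgradsupp]
  exact ⟨hpos, hgauge, by rw [← hsupp], hgradγ⟩

-- zero homogeneous extension

lemma zeroHomExt_smul (f : Euc n → ℝ) {c : ℝ} (hc : 0 < c) (x : Euc n) :
    zeroHomExt f (c • x) = zeroHomExt f x := by
  unfold zeroHomExt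
  rcases eq_or_ne x 0 with rfl | hx
  · simp
  · congr 1
    rw [norm_smul, Real.norm_eq_abs, abs_of_pos hc, smul_smul]
    congr 1
    rw [mul_inv, mul_comm, ← mul_assoc, mul_inv_cancel₀ hc.ne', one_mul]

lemma diffAt_zeroHomExt {f : Euc n → ℝ} (hf : ContDiffOn ℝ 2 (zeroHomExt f) {(0:Euc n)}ᶜ)
    {x : Euc n} (hx : x ≠ 0) : DifferentiableAt ℝ (zeroHomExt f) x :=
  (hf.contDiffAt (isOpen_compl_singleton.mem_nhds hx)).differentiableAt two_ne_zero

lemma fderiv_zeroHomExt_smul {f : Euc n → ℝ} (hf : ContDiffOn ℝ 2 (zeroHomExt f) {(0:Euc n)}ᶜ)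
    {c : ℝ} (hc : 0 < c) {x : Euc n} (hx : x ≠ 0) :
    fderiv ℝ (zeroHomExt f) (c • x) = c⁻¹ • fderiv ℝ (zeroHomExt f) x := by
  have h := fderiv_of_smul_eq (φ := zeroHomExt f) (x := x) (c := c) (m := 1) hc.ne'
    (fun y => by rw [zeroHomExt_smul f hc, one_mul])
    (diffAt_zeroHomExt hf hx) (diffAt_zeroHomExt hf (smul_ne_zero hc.ne' hx))
  rwa [show (1:ℝ)/c = c⁻¹ by field_simp] at h

lemma inner_sphGrad_self {f : Euc n → ℝ} (hf : ContDiffOn ℝ 2 (zeroHomExt f) {(0:Euc n)}ᶜ)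
    {θ : Euc n} (hθ : θ ≠ 0) : ⟪gradient (zeroHomExt f) θ, θ⟫ = 0 := by
  rw [inner_gradient_apply]
  apply fderiv_radial (diffAt_zeroHomExt hf hθ) (ρ := fun _ : ℝ => zeroHomExt f θ)
    (hasDerivAt_const 1 _)
  filter_upwards [eventually_gt_nhds one_pos] with t ht
  exact zeroHomExt_smul f ht θ

end AGradAux

open AGradAux in
theorem anisotropic_gradient_of_homogeneous_extension'
    (n : ℕ) (K : Set (Euc n))
    (hKc : IsCompact K) (hKconv : Convex ℝ K) (h0 : (0:Euc n) ∈ interior K)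
    (hg : ContDiffOn ℝ (⊤:ℕ∞) (halfGaugeSq K) {(0:Euc n)}ᶜ)
    (hII : ∀ x ∈ frontier K, ∀ u : Euc n, ⟪gaussMap K x, u⟫ = 0 → u ≠ 0 →
      0 < secondFF K x u u)
    (f : Euc n → ℝ) (hf : ContDiffOn ℝ 2 (zeroHomExt f) {(0 : Euc n)}ᶜ) (τ : ℝ) :
    ∀ θ ∈ sphere (0 : Euc n) 1, ∀ v : Euc n,
      hess (halfGaugeSq K) (gradient (suppFn K) θ)
          (suppFn K θ • sphGrad f θ + (τ * f θ) • gradient (suppFn K) θ) v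
        = fderiv ℝ (fun x => gauge K x ^ τ * f (gaussMap K x))
            (gradient (suppFn K) θ) v := by
  intro θ hθmem v
  have hθ : ‖θ‖ = 1 := by simpa using hθmem
  have hθne : θ ≠ 0 := by intro h; rw [h, norm_zero] at hθ; exact zero_ne_one hθ
  obtain ⟨hpos, hγ1, hinnθ, hgradγ⟩ := grad_suppFn_spec hKc hKconv h0 hg hII hθ
  set s := suppFn K θ with hs
  set x₀ := gradient (suppFn K) θ with hx₀
  have hx₀ne : x₀ ≠ 0 := by
    intro h; rw [h, gauge_zero] at hγ1; exact zero_ne_one hγ1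
  have hsinv : (0:ℝ) < s⁻¹ := inv_pos.2 hpos
  set p := gradient (gauge K) x₀ with hp
  have hpθ : p = s⁻¹ • θ := hgradγ
  have hpne : p ≠ 0 := by rw [hpθ]; exact smul_ne_zero hsinv.ne' hθne
  -- value facts
  have hzp : zeroHomExt f p = f θ := by
    rw [hpθ, zeroHomExt_smul f hsinv]
    unfold zeroHomExt
    rw [hθ, inv_one, one_smul]
  -- RHS derivative
  have hγd : DifferentiableAt ℝ (gauge K) x₀ := diffAt_gauge hKc h0 hg hx₀ne
  have hΓd : DifferentiableAt ℝ (gradient (gauge K)) x₀ := contDiffAt_grad_gauge hKc h0 hg hx₀ne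
  have hzd : DifferentiableAt ℝ (zeroHomExt f) p := diffAt_zeroHomExt hf hpne
  have hrpow : HasFDerivAt (fun x => gauge K x ^ τ) (τ • fderiv ℝ (gauge K) x₀) x₀ := by
    have h1 : HasDerivAt (fun t : ℝ => t ^ τ) (τ * gauge K x₀ ^ (τ - 1)) (gauge K x₀) :=
      Real.hasDerivAt_rpow_const (Or.inl (by rw [hγ1]; exact one_ne_zero))
    have h2 := h1.comp_hasFDerivAt x₀ hγd.hasFDerivAt
    rwa [hγ1, Real.one_rpow, mul_one] at h2
  have hzcomp : HasFDerivAt (fun x => zeroHomExt f (gradient (gauge K) x))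
      ((fderiv ℝ (zeroHomExt f) p).comp (fderiv ℝ (gradient (gauge K)) x₀)) x₀ :=
    HasFDerivAt.comp (g := zeroHomExt f) (f := gradient (gauge K)) x₀ hzd.hasFDerivAt hΓd.hasFDerivAt
  have hprod : HasFDerivAt (fun x => gauge K x ^ τ * zeroHomExt f (gradient (gauge K) x)) _ x₀ :=
    hrpow.mul hzcomp
  have hRHSfun : (fun x => gauge K x ^ τ * f (gaussMap K x))
      = fun x => gauge K x ^ τ * zeroHomExt f (gradient (gauge K) x) := rfl
  have hRHS : fderiv ℝ (fun x => gauge K x ^ τ * f (gaussMap K x)) x₀ v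
      = f θ * (τ * fderiv ℝ (gauge K) x₀ v)
        + s * ⟪gradient (zeroHomExt f) θ, fderiv ℝ (gradient (gauge K)) x₀ v⟫ := by
    rw [hRHSfun, hprod.fderiv]
    have hval1 : gauge K x₀ ^ τ = 1 := by rw [hγ1, Real.one_rpow]
    have hfd : fderiv ℝ (zeroHomExt f) p = s • fderiv ℝ (zeroHomExt f) θ := by
      rw [hpθ, fderiv_zeroHomExt_smul hf hsinv hθne, inv_inv]
    simp only [ContinuousLinearMap.add_apply, ContinuousLinearMap.smul_apply,
      ContinuousLinearMap.coe_comp', Function.comp_apply, smul_eq_mul, hzp, hval1, hfd]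
    rw [inner_gradient_apply]
    rw [show zeroHomExt f (gradient (gauge K) x₀) = f θ from hzp]
    ring
  -- LHS
  set A := fderiv ℝ (gradient (halfGaugeSq K)) x₀ with hA
  set Aγ := fderiv ℝ (gradient (gauge K)) x₀ with hAγ
  set w := s • sphGrad f θ + (τ * f θ) • x₀ with hw
  have hhess : hess (halfGaugeSq K) x₀ w v = ⟪A w, v⟫ := by
    unfold hess
    have hfun : (fun y => fderiv ℝ (halfGaugeSq K) y v)
        = fun y => ⟪gradient (halfGaugeSq K) y, v⟫ :=
      funext fun y => (inner_gradient_apply _ _ _).symm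
    rw [hfun]
    have h2 : HasFDerivAt (fun y => ⟪gradient (halfGaugeSq K) y, v⟫)
        (((innerSL ℝ (E := Euc n)).flip v).comp A) x₀ :=
      (((innerSL ℝ (E := Euc n)).flip v).hasFDerivAt).comp x₀
        (diffAt_grad_halfGaugeSq hg hx₀ne).hasFDerivAt
    rw [h2.fderiv]
    rfl
  have horth : ⟪p, sphGrad f θ⟫ = 0 := by
    rw [hpθ, real_inner_smul_left]
    have := inner_sphGrad_self hf hθne
    rw [real_inner_comm] at this
    unfold sphGrad
    rw [this, mul_zero]
  have hAsph : A (sphGrad f θ) = Aγ (sphGrad f θ) := by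
    rw [hA, fderiv_grad_halfGaugeSq_apply hKc h0 hg hx₀ne, hγ1, one_smul, ← hp, ← hAγ,
      horth, zero_smul, add_zero]
  have hAx₀ : A x₀ = s⁻¹ • θ := by
    rw [hA, fderiv_grad_halfGaugeSq_self hKc h0 hg hx₀ne,
      grad_halfGaugeSq hKc h0 hg hx₀ne, hγ1, one_smul, ← hp, hpθ]
  have hsymmγ : ⟪Aγ (sphGrad f θ), v⟫ = ⟪Aγ v, sphGrad f θ⟫ := by
    rw [hAγ]
    apply grad_hessian_symm ?_ (contDiffAt_grad_gauge hKc h0 hg hx₀ne)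
    filter_upwards [isOpen_compl_singleton.mem_nhds hx₀ne] with z hz
    exact diffAt_gauge hKc h0 hg hz
  have hγfderiv : fderiv ℝ (gauge K) x₀ v = s⁻¹ * ⟪θ, v⟫ := by
    rw [← inner_gradient_apply, ← hp, hpθ, real_inner_smul_left]
  have hAw : A w = s • Aγ (sphGrad f θ) + ((τ * f θ) * s⁻¹) • θ := by
    rw [hw, map_add, _root_.map_smul, _root_.map_smul, hAsph, hAx₀, smul_smul]
  rw [hhess, hRHS, hγfderiv, hAw, inner_add_left, real_inner_smul_left, real_inner_smul_left,
    hsymmγ]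
  unfold sphGrad
  rw [real_inner_comm (gradient (zeroHomExt f) θ) (Aγ v)]
  ring



/-- **Remark 3.3 (anisotropic-gradient interpretation of `F`)**: push `f` forward onto `∂K`
via `X_K` and let `f̂(x) = ‖x‖_K^τ f(ν_K(x))` be its positively `τ`-homogeneous extension.
Then the gradient of `f̂` with respect to the anisotropic Riemannian metric
`P_K = D²(‖·‖_K²/2)`, evaluated along `∂K`, equals
`F = dX_K(grad_{g_K} f) + τ f X_K` (in Euclidean terms `h_K ∇̄f + τ f Dh_K`, since
`dX_K(grad_{g_K} f) = h_K ∇̄f`).  The gradient with respect to `P_K` is characterized by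
`P_K(grad_{P_K} f̂, v) = df̂(v)` for all `v`. -/
theorem anisotropic_gradient_of_homogeneous_extension
    (n : ℕ) (K : Set (Euc n)) (hK : IsSmoothBody n K) (hKs : IsOriginSymmetric K)
    (f : Euc n → ℝ) (hf : ContDiffOn ℝ 2 (zeroHomExt f) {(0 : Euc n)}ᶜ) (τ : ℝ) :
    ∀ θ ∈ sphere (0 : Euc n) 1, ∀ v : Euc n,
      hess (halfGaugeSq K) (gradient (suppFn K) θ)
          (suppFn K θ • sphGrad f θ + (τ * f θ) • gradient (suppFn K) θ) v
        = fderiv ℝ (fun x => gauge K x ^ τ * f (gaussMap K x))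
            (gradient (suppFn K) θ) v := by
  obtain ⟨⟨hKc, hKconv, h0⟩, hg, hII⟩ := hK
  exact anisotropic_gradient_of_homogeneous_extension' n K hKc hKconv h0 hg hII f hf τ

end
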